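/- (Openness and convexity of the star of a face.) Let H be a central essential arrangement in a finite-dimensional real vector space V. For every face A of H, the star of A, namely the union ⋃{B : B a face of H with A ≤ B}, is an open convex subset of V stable under multiplication by positive real scalars. -/

import Mathlib

/-! Basic notions for a (central, essential) arrangement of hyperplanes `H`
in a finite-dimensional real vector space, its faces, flats, the dual
arrangement and its faces, and the big/small dual cones. -/

/-- Two points `x`, `y` lie in the same face of the hyperplane arrangement `H`:
for every hyperplane `W ∈ H` and every linear functional `f` with kernel `W`,
either `f x · f y > 0` or `f x = f y = 0`. -/
def SameFace {V : Type*} [AddCommGroup V] [Module ℝ V]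
    (H : Finset (Submodule ℝ V)) (x y : V) : Prop :=
  ∀ W ∈ H, ∀ f : V →ₗ[ℝ] ℝ, LinearMap.ker f = W →
    (0 < f x * f y ∨ (f x = 0 ∧ f y = 0))

/-- A face of the arrangement `H`: an equivalence class of the relation `SameFace`. -/
def IsFace {V : Type*} [AddCommGroup V] [Module ℝ V]
    (H : Finset (Submodule ℝ V)) (A : Set V) : Prop :=
  ∃ x : V, A = {y | SameFace H x y}

/-- A chamber is an open face. -/
def IsChamber {V : Type*} [AddCommGroup V] [Module ℝ V] [TopologicalSpace V]
    (H : Finset (Submodule ℝ V)) (A : Set V) : Prop :=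
  IsFace H A ∧ IsOpen A

/-- A flat of `H`: an intersection of a subfamily of the hyperplanes
(the empty subfamily gives all of `V`). -/
def IsFlat {V : Type*} [AddCommGroup V] [Module ℝ V]
    (H : Finset (Submodule ℝ V)) (L : Submodule ℝ V) : Prop :=
  ∃ J : Finset (Submodule ℝ V), J ⊆ H ∧ L = J.inf id

/-- Two (continuous) linear functionals `f`, `g` lie in the same face of the dual
arrangement `H∨`: for every 1-dimensional flat `l` of `H` and every `x ∈ l`,
either `f x · g x > 0` or `f x = g x = 0`. -/
def DualSameFace {V : Type*} [NormedAddCommGroup V] [NormedSpace ℝ V]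
    (H : Finset (Submodule ℝ V)) (f g : V →L[ℝ] ℝ) : Prop :=
  ∀ l : Submodule ℝ V, IsFlat H l → Module.finrank ℝ l = 1 →
    ∀ x ∈ l, (0 < f x * g x ∨ (f x = 0 ∧ g x = 0))

/-- A face of the dual arrangement `H∨` in the dual space. -/
def IsDualFace {V : Type*} [NormedAddCommGroup V] [NormedSpace ℝ V]
    (H : Finset (Submodule ℝ V)) (A : Set (V →L[ℝ] ℝ)) : Prop :=
  ∃ f : V →L[ℝ] ℝ, A = {g | DualSameFace H f g}

/-- A chamber of the dual arrangement: an open dual face. -/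
def IsDualChamber {V : Type*} [NormedAddCommGroup V] [NormedSpace ℝ V]
    (H : Finset (Submodule ℝ V)) (A : Set (V →L[ℝ] ℝ)) : Prop :=
  IsDualFace H A ∧ IsOpen A

/-- The big dual cone `U(A∨)` of a dual face `A∨`. -/
def bigCone {V : Type*} [NormedAddCommGroup V] [NormedSpace ℝ V]
    (A : Set (V →L[ℝ] ℝ)) : Set V :=
  {x | ∀ f ∈ A, 0 ≤ f x}

/-- The small dual cone `V(A∨)` of a dual face `A∨`: the intersection of the big
dual cones of all dual chambers `B∨` with `A∨ ≤ B∨`. -/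
def smallCone {V : Type*} [NormedAddCommGroup V] [NormedSpace ℝ V]
    (H : Finset (Submodule ℝ V)) (A : Set (V →L[ℝ] ℝ)) : Set V :=
  ⋂ B ∈ {B : Set (V →L[ℝ] ℝ) | IsDualChamber H B ∧ A ⊆ closure B}, bigCone B

/-- Auxiliary: two functionals with the same hyperplane kernel are proportional. -/
lemma aux_exists_smul_of_ker_eq {V : Type*} [AddCommGroup V] [Module ℝ V]
    (f g : V →ₗ[ℝ] ℝ) (hf : f ≠ 0) (h : LinearMap.ker g = LinearMap.ker f) :
    ∃ c : ℝ, c ≠ 0 ∧ ∀ w, g w = c * f w := by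
  obtain ⟨v, hv⟩ : ∃ v, f v ≠ 0 := by
    by_contra hc; push_neg at hc; exact hf (LinearMap.ext fun w => hc w)
  have hgv : g v ≠ 0 := by
    intro h0
    have hmem : v ∈ LinearMap.ker g := h0
    rw [h] at hmem; exact hv hmem
  refine ⟨g v / f v, div_ne_zero hgv hv, fun w => ?_⟩
  have hker : w - (f w / f v) • v ∈ LinearMap.ker f := by
    simp [LinearMap.mem_ker, map_sub, map_smul, div_mul_cancel₀, hv]
  rw [← h] at hker
  have hzero := LinearMap.mem_ker.mp hker
  rw [map_sub, map_smul, smul_eq_mul, sub_eq_zero] at hzero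
  rw [hzero]; field_simp

/-- Auxiliary: reflexivity of `SameFace`. -/
lemma aux_sameFace_refl {V : Type*} [AddCommGroup V] [Module ℝ V]
    (H : Finset (Submodule ℝ V)) (x : V) : SameFace H x x := by
  intro W hW f hf
  by_cases h : f x = 0
  · exact Or.inr ⟨h, h⟩
  · exact Or.inl (mul_self_pos.mpr h)

/-- the star of a face `A` of a central essential arrangement,
i.e. the union of all faces `B` with `A ≤ B`, is open, convex, and stable
under multiplication by positive scalars. -/
theorem statement15 {V : Type*} [NormedAddCommGroup V] [NormedSpace ℝ V]
    [FiniteDimensional ℝ V] (H : Finset (Submodule ℝ V))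
    (hHyp : ∀ W ∈ H, ∃ f : V →ₗ[ℝ] ℝ, f ≠ 0 ∧ LinearMap.ker f = W)
    (hEss : (⋂ W ∈ H, (W : Set V)) = {0})
    (A : Set V) (hA : IsFace H A) :
    IsOpen (⋃₀ {B : Set V | IsFace H B ∧ A ⊆ closure B}) ∧
    Convex ℝ (⋃₀ {B : Set V | IsFace H B ∧ A ⊆ closure B}) ∧
    ∀ c : ℝ, 0 < c → ∀ x ∈ ⋃₀ {B : Set V | IsFace H B ∧ A ⊆ closure B},
      c • x ∈ ⋃₀ {B : Set V | IsFace H B ∧ A ⊆ closure B} := by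
  obtain ⟨x₀, rfl⟩ := hA
  set S : Set V := {y | ∀ W ∈ H, ∀ f : V →ₗ[ℝ] ℝ, LinearMap.ker f = W →
    f x₀ ≠ 0 → 0 < f x₀ * f y} with hSdef
  have hx₀A : x₀ ∈ {y | SameFace H x₀ y} := aux_sameFace_refl H x₀
  -- The star equals S
  have hstar : ⋃₀ {B : Set V | IsFace H B ∧ {y | SameFace H x₀ y} ⊆ closure B} = S := by
    ext y
    constructor
    · rintro ⟨B, ⟨⟨z, rfl⟩, hAB⟩, hyB⟩
      intro W hW f hfker hfx₀
      have hfcont : Continuous f := f.continuous_of_finiteDimensional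
      have hx₀cl : x₀ ∈ closure {w | SameFace H z w} := hAB hx₀A
      have hz0 : f z ≠ 0 := by
        intro h0
        have hsub : {w | SameFace H z w} ⊆ {w | f w = 0} := by
          intro w hw
          rcases hw W hW f hfker with h | h
          · rw [h0, zero_mul] at h; exact absurd h (lt_irrefl 0)
          · exact h.2
        exact hfx₀ (closure_minimal hsub (isClosed_eq hfcont continuous_const) hx₀cl)
      have h1 : 0 ≤ f z * f x₀ := by
        have hsub : {w | SameFace H z w} ⊆ {w | 0 ≤ f z * f w} := by
          intro w hw
          rcases hw W hW f hfker with h | h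
          · exact le_of_lt h
          · simp [h.2]
        exact closure_minimal hsub
          (isClosed_le continuous_const (continuous_const.mul hfcont)) hx₀cl
      have h1' : 0 < f z * f x₀ := h1.lt_of_ne (Ne.symm (mul_ne_zero hz0 hfx₀))
      have h2 : 0 < f z * f y := by
        rcases hyB W hW f hfker with h | h
        · exact h
        · exact absurd h.1 hz0
      nlinarith [mul_pos h1' h2, mul_self_pos.mpr hz0]
    · intro hyS
      refine ⟨{w | SameFace H y w}, ⟨⟨y, rfl⟩, ?_⟩, aux_sameFace_refl H y⟩
      intro a ha
      have hx0_of_ha : ∀ W ∈ H, ∀ f : V →ₗ[ℝ] ℝ, LinearMap.ker f = W →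
          f a ≠ 0 → f x₀ ≠ 0 := by
        intro W hW f hfker ha0 h0
        rcases ha W hW f hfker with h | h
        · rw [h0, zero_mul] at h; exact absurd h (lt_irrefl 0)
        · exact ha0 h.2
      have htend : Filter.Tendsto (fun n : ℕ => a + ((n : ℝ) + 1)⁻¹ • (y - a))
          Filter.atTop (nhds a) := by
        have h1 : Filter.Tendsto (fun n : ℕ => ((n : ℝ) + 1)⁻¹) Filter.atTop (nhds 0) := by
          simpa [one_div] using tendsto_one_div_add_atTop_nhds_zero_nat (𝕜 := ℝ)
        have h2 := h1.smul_const (y - a)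
        rw [zero_smul] at h2
        simpa using tendsto_const_nhds.add h2
      refine mem_closure_of_tendsto htend (Filter.Eventually.of_forall fun n => ?_)
      intro W hW f hfker
      have ht0 : (0 : ℝ) < ((n : ℝ) + 1)⁻¹ := by positivity
      have ht1 : ((n : ℝ) + 1)⁻¹ ≤ 1 := by
        rw [inv_le_one_iff₀]; right; push_cast; linarith [Nat.cast_nonneg (α := ℝ) n]
      have hfu : f (a + ((n : ℝ) + 1)⁻¹ • (y - a))
          = f a + ((n : ℝ) + 1)⁻¹ * (f y - f a) := by
        rw [map_add, map_smul, map_sub, smul_eq_mul]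
      by_cases hy0 : f y = 0
      · have ha0 : f a = 0 := by
          by_contra ha0
          have hx0 := hx0_of_ha W hW f hfker ha0
          have := hyS W hW f hfker hx0
          rw [hy0, mul_zero] at this; exact absurd this (lt_irrefl 0)
        exact Or.inr ⟨hy0, by rw [hfu, ha0, hy0]; ring⟩
      · left
        have hay : 0 ≤ f a * f y := by
          by_cases ha0 : f a = 0
          · simp [ha0]
          · have hx0 := hx0_of_ha W hW f hfker ha0
            have hxa : 0 < f x₀ * f a := by
              rcases ha W hW f hfker with h | h
              · exact h
              · exact absurd h.2 ha0
            have hxy : 0 < f x₀ * f y := hyS W hW f hfker hx0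
            nlinarith [mul_pos hxa hxy, mul_self_pos.mpr hx0]
        rw [hfu]
        nlinarith [mul_self_pos.mpr hy0,
          mul_nonneg (sub_nonneg.mpr ht1) hay,
          mul_pos ht0 (mul_self_pos.mpr hy0)]
  rw [hstar]
  refine ⟨?_, ?_, ?_⟩
  · -- openness
    have hrw : S = ⋂ W ∈ H, {y : V | ∀ f : V →ₗ[ℝ] ℝ, LinearMap.ker f = W →
        f x₀ ≠ 0 → 0 < f x₀ * f y} := by
      ext y; simp [hSdef, Set.mem_iInter]
    rw [hrw]
    apply isOpen_biInter_finset
    intro W hW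
    obtain ⟨f₀, hf₀, hker₀⟩ := hHyp W hW
    have heq : {y : V | ∀ f : V →ₗ[ℝ] ℝ, LinearMap.ker f = W → f x₀ ≠ 0 → 0 < f x₀ * f y}
        = {y : V | f₀ x₀ ≠ 0 → 0 < f₀ x₀ * f₀ y} := by
      ext y
      constructor
      · intro h h0; exact h f₀ hker₀ h0
      · intro h f hfker h0
        obtain ⟨c, hc, hcf⟩ := aux_exists_smul_of_ker_eq f₀ f hf₀ (hfker.trans hker₀.symm)
        have h0' : f₀ x₀ ≠ 0 := by
          intro hz; exact h0 (by rw [hcf x₀, hz, mul_zero])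
        have hp := h h0'
        rw [hcf x₀, hcf y]
        nlinarith [mul_self_pos.mpr hc]
    rw [heq]
    by_cases h0 : f₀ x₀ = 0
    · convert isOpen_univ using 1
      ext y; simp [h0]
    · have : {y : V | f₀ x₀ ≠ 0 → 0 < f₀ x₀ * f₀ y} = {y : V | 0 < f₀ x₀ * f₀ y} := by
        ext y; simp [h0]
      rw [this]
      exact isOpen_lt continuous_const
        (continuous_const.mul f₀.continuous_of_finiteDimensional)
  · -- convexity
    intro y hy z hz p q hp hq hpq
    intro W hW f hfker h0
    have h1 := hy W hW f hfker h0
    have h2 := hz W hW f hfker h0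
    rw [map_add, map_smul, map_smul, smul_eq_mul, smul_eq_mul]
    have hpos : 0 < p ∨ 0 < q := by
      by_contra hcon; push_neg at hcon; linarith [hcon.1, hcon.2]
    rcases hpos with hp' | hq'
    · nlinarith [mul_pos hp' h1, mul_nonneg hq h2.le]
    · nlinarith [mul_nonneg hp h1.le, mul_pos hq' h2]
  · -- stability under positive scalars
    intro c hc x hx W hW f hfker h0
    have h1 := hx W hW f hfker h0
    rw [map_smul, smul_eq_mul]
    nlinarith
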